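/- Let γ ≥ 0 be real, let N ≥ 2 be a natural number, let δ ∈ (0,1), and let D₁, D₂ ≥ 0 with D₁ > 0 or D₂ > 0. On a probability space, let (Y_i) for i = 1,…,N² be independent real random variables such that each of the first N(N−1) variables almost surely takes values in a closed interval of length at most (γ+1)·D₂/(N(N−1)), and each of the remaining N variables almost surely takes values in a closed interval of length at most D₁/N. Let S = Σ_{i=1}^{N²} Y_i. Then P(|S − E[S]| ≥ √(D₁² + (γ+1)²·D₂²/(N−1)) · √(log(2/δ)/(2N))) ≤ δ. -/

import Mathlib

open MeasureTheory ProbabilityTheory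
open Real

lemma hoeffding_core (p : ℝ) (hp0 : 0 ≤ p) (hp1 : p ≤ 1) (h : ℝ) :
    (1 - p) + p * Real.exp h ≤ Real.exp (p * h + h ^ 2 / 8) := by
  set g : ℝ → ℝ := fun x => 1 - p + p * Real.exp x with hg
  have hgpos : ∀ x, 0 < g x := by
    intro x
    rcases lt_or_eq_of_le hp1 with h1 | h1
    · have : 0 < 1 - p := by linarith
      have : 0 ≤ p * Real.exp x := mul_nonneg hp0 (exp_pos x).le
      simp only [hg]; linarith
    · have hx : g x = Real.exp x := by simp [hg, h1]
      rw [hx]; positivity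
  have hgd : ∀ x, HasDerivAt g (p * Real.exp x) x := by
    intro x
    exact ((Real.hasDerivAt_exp x).const_mul p).const_add (1 - p)
  set F : ℝ → ℝ := fun x => p * x + x ^ 2 / 8 - Real.log (g x) with hF
  set F1 : ℝ → ℝ := fun x => p + x / 4 - p * Real.exp x / g x with hF1
  have hFd : ∀ x, HasDerivAt F (F1 x) x := by
    intro x
    have h1 : HasDerivAt (fun x : ℝ => p * x + x ^ 2 / 8) (p + 2 * x / 8) x := by
      have := ((hasDerivAt_pow 2 x).div_const 8).const_add 0
      have h2 := (hasDerivAt_id x).const_mul p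
      exact (h2.add ((hasDerivAt_pow 2 x).div_const 8)).congr_deriv (by norm_num)
    have h2 : HasDerivAt (fun x => Real.log (g x)) (p * Real.exp x / g x) x :=
      (hgd x).log (hgpos x).ne'
    have := h1.sub h2
    exact this.congr_deriv (by simp only [hF1]; ring)
  set F2 : ℝ → ℝ := fun x =>
    1 / 4 - (p * Real.exp x * g x - p * Real.exp x * (p * Real.exp x)) / (g x) ^ 2 with hF2
  have hF1d : ∀ x, HasDerivAt F1 (F2 x) x := by
    intro x
    have h1 : HasDerivAt (fun x : ℝ => p + x / 4) (1 / 4) x := by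
      simpa using ((hasDerivAt_id x).div_const 4).const_add p
    have h2 : HasDerivAt (fun x => p * Real.exp x / g x)
        ((p * Real.exp x * g x - p * Real.exp x * (p * Real.exp x)) / (g x) ^ 2) x := by
      exact ((Real.hasDerivAt_exp x).const_mul p).div (hgd x) (hgpos x).ne'
    exact (h1.sub h2).congr_deriv (by simp only [hF2])
  have hF2nonneg : ∀ x, 0 ≤ F2 x := by
    intro x
    have hgx := hgpos x
    have key : F2 x = (g x - 2 * (p * Real.exp x)) ^ 2 / (4 * (g x) ^ 2) := by
      simp only [hF2]
      field_simp [hF2]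
      ring
    rw [key]; positivity
  have hF1mono : Monotone F1 := by
    apply monotone_of_deriv_nonneg
    · exact fun x => (hF1d x).differentiableAt
    · intro x
      rw [(hF1d x).deriv]
      exact hF2nonneg x
  have hF10 : F1 0 = 0 := by
    simp [hF1, hg]
  have hFdiff : Differentiable ℝ F := fun x => (hFd x).differentiableAt
  have hF0 : F 0 = 0 := by simp [hF, hg]
  have hFnonneg : 0 ≤ F h := by
    rcases le_total 0 h with hh | hh
    · have : MonotoneOn F (Set.Ici 0) := by
        apply monotoneOn_of_deriv_nonneg (convex_Ici 0) hFdiff.continuous.continuousOn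
          (hFdiff.differentiableOn)
        intro x hx
        rw [(hFd x).deriv]
        rw [interior_Ici] at hx
        calc (0:ℝ) = F1 0 := hF10.symm
          _ ≤ F1 x := hF1mono (le_of_lt hx)
      have := this (Set.self_mem_Ici) (Set.mem_Ici.mpr hh) hh
      rwa [hF0] at this
    · have : AntitoneOn F (Set.Iic 0) := by
        apply antitoneOn_of_deriv_nonpos (convex_Iic 0) hFdiff.continuous.continuousOn
          (hFdiff.differentiableOn)
        intro x hx
        rw [(hFd x).deriv]
        rw [interior_Iic] at hx
        calc F1 x ≤ F1 0 := hF1mono (le_of_lt hx)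
          _ = 0 := hF10
      have := this (Set.mem_Iic.mpr hh) (Set.self_mem_Iic) hh
      rwa [hF0] at this
  have hlog : Real.log (g h) ≤ p * h + h ^ 2 / 8 := by
    simp only [hF] at hFnonneg
    linarith
  calc g h = Real.exp (Real.log (g h)) := (Real.exp_log (hgpos h)).symm
    _ ≤ Real.exp (p * h + h ^ 2 / 8) := Real.exp_le_exp.mpr hlog

lemma bdd_integrable {Ω : Type*} [MeasurableSpace Ω] (μ : Measure Ω) [IsProbabilityMeasure μ]
    {X : Ω → ℝ} (hX : AEStronglyMeasurable X μ) {a b : ℝ}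
    (hab : ∀ᵐ ω ∂μ, X ω ∈ Set.Icc a b) : Integrable X μ := by
  refine Integrable.mono' (integrable_const (max |a| |b|)) hX ?_
  filter_upwards [hab] with ω hω
  rw [Real.norm_eq_abs]
  exact abs_le_max_abs_abs hω.1 hω.2

lemma hoeffding_mgf {Ω : Type*} [MeasurableSpace Ω] (μ : Measure Ω) [IsProbabilityMeasure μ]
    {X : Ω → ℝ} (hX : Measurable X) {a b : ℝ} (hab : ∀ᵐ ω ∂μ, X ω ∈ Set.Icc a b)
    (hmean : ∫ ω, X ω ∂μ = 0) (t : ℝ) :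
    mgf X μ t ≤ Real.exp (t ^ 2 * (b - a) ^ 2 / 8) := by
  have hne : (ae μ).NeBot := ae_neBot.mpr (IsProbabilityMeasure.ne_zero μ)
  obtain ⟨ω₀, hω₀⟩ := hab.exists
  have hab' : a ≤ b := le_trans hω₀.1 hω₀.2
  have hXint : Integrable X μ := bdd_integrable μ hX.aestronglyMeasurable hab
  have ha0 : a ≤ 0 := by
    have : ∫ _ω, a ∂μ ≤ ∫ ω, X ω ∂μ :=
      integral_mono_ae (integrable_const a) hXint (hab.mono fun ω hω => hω.1)
    simpa [hmean] using this
  have hb0 : 0 ≤ b := by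
    have : ∫ ω, X ω ∂μ ≤ ∫ _ω, b ∂μ :=
      integral_mono_ae hXint (integrable_const b) (hab.mono fun ω hω => hω.2)
    simpa [hmean] using this
  have hexpint : Integrable (fun ω => Real.exp (t * X ω)) μ := by
    refine Integrable.mono' (integrable_const (Real.exp (|t| * max |a| |b|)))
      ((hX.const_mul t).exp).aestronglyMeasurable ?_
    filter_upwards [hab] with ω hω
    rw [Real.norm_eq_abs, abs_of_pos (exp_pos _), Real.exp_le_exp]
    calc t * X ω ≤ |t * X ω| := le_abs_self _
      _ = |t| * |X ω| := abs_mul _ _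
      _ ≤ |t| * max |a| |b| := by
          exact mul_le_mul_of_nonneg_left (abs_le_max_abs_abs hω.1 hω.2) (abs_nonneg t)
  rcases eq_or_lt_of_le hab' with heq | hlt
  · -- a = b, hence a = b = 0 and X = 0 a.e.
    have ha : a = 0 := le_antisymm ha0 (heq ▸ hb0)
    have hb : b = 0 := by rw [← heq, ha]
    have hX0 : ∀ᵐ ω ∂μ, X ω = 0 := by
      filter_upwards [hab] with ω hω
      rw [ha] at hω; rw [hb] at hω
      exact le_antisymm hω.2 hω.1
    have : mgf X μ t = 1 := by
      rw [mgf]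
      have : ∀ᵐ ω ∂μ, Real.exp (t * X ω) = 1 := by
        filter_upwards [hX0] with ω hω; simp [hω]
      rw [integral_congr_ae this]
      simp
    rw [this]
    exact Real.one_le_exp (by positivity)
  · -- a < b
    set p : ℝ := -a / (b - a) with hp
    have hba : 0 < b - a := sub_pos.mpr hlt
    have hp0 : 0 ≤ p := div_nonneg (neg_nonneg.mpr ha0) hba.le
    have hp1 : p ≤ 1 := by
      rw [div_le_one hba]; linarith
    -- pointwise convexity bound
    have hpt : ∀ᵐ ω ∂μ, Real.exp (t * X ω) ≤
        (b - X ω) / (b - a) * Real.exp (t * a) + (X ω - a) / (b - a) * Real.exp (t * b) := by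
      filter_upwards [hab] with ω hω
      have hw1 : 0 ≤ (b - X ω) / (b - a) := div_nonneg (by linarith [hω.2]) hba.le
      have hw2 : 0 ≤ (X ω - a) / (b - a) := div_nonneg (by linarith [hω.1]) hba.le
      have hws : (b - X ω) / (b - a) + (X ω - a) / (b - a) = 1 := by
        field_simp
        ring
      have := convexOn_exp.2 (Set.mem_univ (t * a)) (Set.mem_univ (t * b)) hw1 hw2 hws
      have harg : (b - X ω) / (b - a) * (t * a) + (X ω - a) / (b - a) * (t * b) = t * X ω := by
        field_simp
        ring
      simp only [smul_eq_mul] at this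
      rw [harg] at this
      exact this
    -- integrate
    set e1 := Real.exp (t * a) with he1
    set e2 := Real.exp (t * b) with he2
    have hrw : ∀ x : ℝ, (b - x) / (b - a) * e1 + (x - a) / (b - a) * e2
        = ((e2 - e1) / (b - a)) * x + (b * e1 - a * e2) / (b - a) := by
      intro x; field_simp; ring
    have hrhs_int : Integrable (fun ω =>
        (b - X ω) / (b - a) * e1 + (X ω - a) / (b - a) * e2) μ := by
      simp only [hrw]
      exact (hXint.const_mul _).add (integrable_const _)
    have hint_le : mgf X μ t ≤ b / (b - a) * e1 + (-a) / (b - a) * e2 := by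
      rw [mgf]
      refine le_trans (integral_mono_ae hexpint hrhs_int hpt) ?_
      simp only [hrw]
      rw [integral_add (hXint.const_mul _) (integrable_const _), integral_const_mul, hmean,
        integral_const]
      simp only [mul_zero, zero_add, Measure.real, measure_univ, ENNReal.toReal_one, smul_eq_mul, one_mul]
      apply le_of_eq
      field_simp
      ring
    -- apply the core inequality with h = t * (b - a)
    have hcore := hoeffding_core p hp0 hp1 (t * (b - a))
    have h1 : (1 : ℝ) - p = b / (b - a) := by
      rw [hp]; field_simp
      ring
    have he : e1 * Real.exp (t * (b - a)) = e2 := by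
      rw [he1, he2, ← Real.exp_add]; congr 1; ring
    have hfact : b / (b - a) * e1 + (-a) / (b - a) * e2
        = e1 * ((1 - p) + p * Real.exp (t * (b - a))) := by
      calc b / (b - a) * e1 + (-a) / (b - a) * e2
          = (1 - p) * e1 + p * e2 := by rw [h1, hp]
        _ = (1 - p) * e1 + p * (e1 * Real.exp (t * (b - a))) := by rw [he]
        _ = e1 * ((1 - p) + p * Real.exp (t * (b - a))) := by ring
    have hfinal : e1 * ((1 - p) + p * Real.exp (t * (b - a)))
        ≤ Real.exp (t ^ 2 * (b - a) ^ 2 / 8) := by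
      have hz : t * a + p * (t * (b - a)) = 0 := by
        rw [hp]; field_simp; ring
      calc e1 * ((1 - p) + p * Real.exp (t * (b - a)))
          ≤ e1 * Real.exp (p * (t * (b - a)) + (t * (b - a)) ^ 2 / 8) := by
            exact mul_le_mul_of_nonneg_left hcore (exp_pos _).le
        _ = Real.exp (t * a + (p * (t * (b - a)) + (t * (b - a)) ^ 2 / 8)) := by
            rw [he1, ← Real.exp_add]
        _ = Real.exp (t ^ 2 * (b - a) ^ 2 / 8) := by
            congr 1
            rw [show t * a + (p * (t * (b - a)) + (t * (b - a)) ^ 2 / 8)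
              = (t * a + p * (t * (b - a))) + (t * (b - a)) ^ 2 / 8 by ring, hz]
            ring
    calc mgf X μ t ≤ _ := hint_le
      _ = _ := hfact
      _ ≤ _ := hfinal

lemma hoeffding_sum_ge {Ω : Type*} [MeasurableSpace Ω] (μ : Measure Ω) [IsProbabilityMeasure μ]
    {n : ℕ} (Y : Fin n → Ω → ℝ) (hmeas : ∀ i, Measurable (Y i))
    (hindep : iIndepFun Y μ)
    (a b : Fin n → ℝ) (hab : ∀ i, ∀ᵐ ω ∂μ, Y i ω ∈ Set.Icc (a i) (b i))
    (hmean : ∀ i, ∫ ω, Y i ω ∂μ = 0)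
    (C : ℝ) (hC : 0 < C) (hsum : ∑ i, (b i - a i) ^ 2 ≤ C)
    (ε : ℝ) (hε : 0 ≤ ε) :
    (μ {ω | ε ≤ ∑ i, Y i ω}).toReal ≤ Real.exp (-2 * ε ^ 2 / C) := by
  set t : ℝ := 4 * ε / C with ht
  have ht0 : 0 ≤ t := by positivity
  have hint : ∀ i, Integrable (fun ω => Real.exp (t * Y i ω)) μ := by
    intro i
    refine Integrable.mono' (integrable_const (Real.exp (|t| * max |a i| |b i|)))
      (((hmeas i).const_mul t).exp).aestronglyMeasurable ?_
    filter_upwards [hab i] with ω hω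
    rw [Real.norm_eq_abs, abs_of_pos (exp_pos _), Real.exp_le_exp]
    calc t * Y i ω ≤ |t * Y i ω| := le_abs_self _
      _ = |t| * |Y i ω| := abs_mul _ _
      _ ≤ |t| * max |a i| |b i| :=
          mul_le_mul_of_nonneg_left (abs_le_max_abs_abs hω.1 hω.2) (abs_nonneg t)
  have hintS : Integrable (fun ω => Real.exp (t * (∑ i, Y i) ω)) μ :=
    hindep.integrable_exp_mul_sum hmeas (fun i _ => hint i)
  have hset : {ω | ε ≤ ∑ i, Y i ω} = {ω | ε ≤ (∑ i, Y i) ω} := by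
    ext ω; simp [Finset.sum_apply]
  have hcher := measure_ge_le_exp_mul_mgf (μ := μ) (X := ∑ i, Y i) ε ht0 hintS
  rw [hset]
  refine le_trans hcher ?_
  have hmgf : mgf (∑ i, Y i) μ t ≤ Real.exp (t ^ 2 * C / 8) := by
    rw [hindep.mgf_sum hmeas]
    calc ∏ i, mgf (Y i) μ t ≤ ∏ i, Real.exp (t ^ 2 * (b i - a i) ^ 2 / 8) := by
          refine Finset.prod_le_prod (fun i _ => mgf_nonneg) ?_
          intro i _
          exact hoeffding_mgf μ (hmeas i) (hab i) (hmean i) t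
      _ = Real.exp (∑ i, t ^ 2 * (b i - a i) ^ 2 / 8) := by
          rw [Real.exp_sum]
      _ ≤ Real.exp (t ^ 2 * C / 8) := by
          rw [Real.exp_le_exp]
          rw [← Finset.sum_div, ← Finset.mul_sum]
          have := mul_le_mul_of_nonneg_left hsum (sq_nonneg t)
          linarith
  calc Real.exp (-t * ε) * mgf (∑ i, Y i) μ t
      ≤ Real.exp (-t * ε) * Real.exp (t ^ 2 * C / 8) :=
        mul_le_mul_of_nonneg_left hmgf (exp_pos _).le
    _ = Real.exp (-t * ε + t ^ 2 * C / 8) := (Real.exp_add _ _).symm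
    _ = Real.exp (-2 * ε ^ 2 / C) := by
        congr 1
        rw [ht]
        field_simp
        ring

/-- The sharper intermediate concentration bound in the proof of Theorem 1 of the
paper, with `D₁` the range of the `N` matched-pair summands and `D₂` the range of
the `N(N-1)` cross-pair summands. -/
lemma hoeffding_two_sided {Ω : Type*} [MeasurableSpace Ω] (μ : Measure Ω) [IsProbabilityMeasure μ]
    {n : ℕ} (Y : Fin n → Ω → ℝ) (hmeas : ∀ i, Measurable (Y i))
    (hindep : iIndepFun Y μ)
    (a b : Fin n → ℝ) (hab : ∀ i, ∀ᵐ ω ∂μ, Y i ω ∈ Set.Icc (a i) (b i))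
    (hmean : ∀ i, ∫ ω, Y i ω ∂μ = 0)
    (C : ℝ) (hC : 0 < C) (hsum : ∑ i, (b i - a i) ^ 2 ≤ C)
    (ε : ℝ) (hε : 0 ≤ ε) :
    (μ {ω | ε ≤ |∑ i, Y i ω|}).toReal ≤ 2 * Real.exp (-2 * ε ^ 2 / C) := by
  set A := {ω | ε ≤ ∑ i, Y i ω} with hA
  set B := {ω | ε ≤ ∑ i, -(Y i ω)} with hB
  have hsub : {ω | ε ≤ |∑ i, Y i ω|} ⊆ A ∪ B := by
    intro ω hω
    simp only [Set.mem_setOf_eq] at hω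
    rcases abs_cases (∑ i, Y i ω) with ⟨heq, _⟩ | ⟨heq, _⟩
    · left; exact Set.mem_setOf_eq ▸ (heq ▸ hω)
    · right
      simp only [hB, Set.mem_setOf_eq, Finset.sum_neg_distrib]
      rw [heq] at hω
      linarith
  have hBbd : (μ B).toReal ≤ Real.exp (-2 * ε ^ 2 / C) := by
    have hindep' : iIndepFun (fun i => -(Y i)) μ := by
      have := iIndepFun.comp hindep (fun _ => fun x : ℝ => -x) (fun _ => measurable_neg)
      exact this
    refine hoeffding_sum_ge μ (fun i => -(Y i)) (fun i => (hmeas i).neg) hindep'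
      (fun i => -(b i)) (fun i => -(a i)) ?_ ?_ C hC ?_ ε hε
    · intro i
      filter_upwards [hab i] with ω hω
      exact ⟨neg_le_neg hω.2, neg_le_neg hω.1⟩
    · intro i
      simp only [Pi.neg_apply]
      rw [integral_neg, hmean i, neg_zero]
    · convert hsum using 2 with i
      ring
  have hAbd : (μ A).toReal ≤ Real.exp (-2 * ε ^ 2 / C) :=
    hoeffding_sum_ge μ Y hmeas hindep a b hab hmean C hC hsum ε hε
  have h1 : μ {ω | ε ≤ |∑ i, Y i ω|} ≤ μ A + μ B :=
    le_trans (measure_mono hsub) (measure_union_le A B)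
  have h2 : (μ {ω | ε ≤ |∑ i, Y i ω|}).toReal ≤ (μ A + μ B).toReal := by
    apply ENNReal.toReal_mono _ h1
    exact ENNReal.add_ne_top.mpr ⟨measure_ne_top μ A, measure_ne_top μ B⟩
  rw [ENNReal.toReal_add (measure_ne_top μ A) (measure_ne_top μ B)] at h2
  linarith

theorem atd_self_supervised_loss_concentration_sharp
    {Ω : Type*} [MeasurableSpace Ω] (μ : Measure Ω) [IsProbabilityMeasure μ]
    (γ : ℝ) (hγ : 0 ≤ γ) (N : ℕ) (hN : 2 ≤ N)
    (δ : ℝ) (hδ : δ ∈ Set.Ioo (0 : ℝ) 1)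
    (D₁ D₂ : ℝ) (hD₁ : 0 ≤ D₁) (hD₂ : 0 ≤ D₂) (hpos : 0 < D₁ ∨ 0 < D₂)
    (Y : Fin (N ^ 2) → Ω → ℝ) (hmeas : ∀ i, Measurable (Y i))
    (hindep : iIndepFun Y μ)
    (a b : Fin (N ^ 2) → ℝ)
    (hab : ∀ i, ∀ᵐ ω ∂μ, Y i ω ∈ Set.Icc (a i) (b i))
    (hlen₁ : ∀ i : Fin (N ^ 2), (i : ℕ) < N * (N - 1) →
      b i - a i ≤ (γ + 1) * D₂ / ((N : ℝ) * ((N : ℝ) - 1)))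
    (hlen₂ : ∀ i : Fin (N ^ 2), N * (N - 1) ≤ (i : ℕ) →
      b i - a i ≤ D₁ / (N : ℝ)) :
    μ {ω | Real.sqrt (D₁ ^ 2 + (γ + 1) ^ 2 * D₂ ^ 2 / ((N : ℝ) - 1)) *
            Real.sqrt (Real.log (2 / δ) / (2 * (N : ℝ)))
          ≤ |(∑ i, Y i ω) - ∫ ω', (∑ i, Y i ω') ∂μ|}
      ≤ ENNReal.ofReal δ := by
  obtain ⟨hδ0, hδ1⟩ := hδ
  have hne : (ae μ).NeBot := ae_neBot.mpr (IsProbabilityMeasure.ne_zero μ)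
  set Nr : ℝ := (N : ℝ) with hNr
  have hNr2 : (2 : ℝ) ≤ Nr := by rw [hNr]; exact_mod_cast hN
  have hNr0 : 0 < Nr := by linarith
  have hNr1 : 1 ≤ Nr - 1 := by linarith
  have hNr1' : 0 < Nr - 1 := by linarith
  -- key scalars
  set A : ℝ := D₁ ^ 2 + (γ + 1) ^ 2 * D₂ ^ 2 / (Nr - 1) with hAdef
  have hApos : 0 < A := by
    rw [hAdef]
    rcases hpos with h | h
    · have h1 : 0 < D₁ ^ 2 := by positivity
      have h2 : 0 ≤ (γ + 1) ^ 2 * D₂ ^ 2 / (Nr - 1) := by positivity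
      linarith
    · have h1 : 0 < (γ + 1) ^ 2 * D₂ ^ 2 / (Nr - 1) := by positivity
      have h2 : 0 ≤ D₁ ^ 2 := by positivity
      linarith
  set Bc : ℝ := Real.log (2 / δ) / (2 * Nr) with hBdef
  have hlog : 0 < Real.log (2 / δ) := by
    apply Real.log_pos
    rw [lt_div_iff₀ hδ0]
    linarith
  have hBpos : 0 < Bc := by positivity
  set ε : ℝ := Real.sqrt A * Real.sqrt Bc with hε
  have hε0 : 0 ≤ ε := by positivity
  have hε2 : ε ^ 2 = A * Bc := by
    rw [hε, mul_pow, Real.sq_sqrt hApos.le, Real.sq_sqrt hBpos.le]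
  set C : ℝ := A / Nr with hCdef
  have hCpos : 0 < C := by positivity
  -- centered variables
  set m : Fin (N ^ 2) → ℝ := fun i => ∫ ω, Y i ω ∂μ with hm
  set Z : Fin (N ^ 2) → Ω → ℝ := fun i ω => Y i ω - m i with hZ
  have hZmeas : ∀ i, Measurable (Z i) := fun i => (hmeas i).sub_const (m i)
  have hZindep : iIndepFun Z μ := by
    have := iIndepFun.comp hindep (fun i => fun x : ℝ => x - m i)
      (fun i => measurable_id.sub_const (m i))
    exact this
  have hYint : ∀ i, Integrable (Y i) μ :=
    fun i => bdd_integrable μ (hmeas i).aestronglyMeasurable (hab i)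
  have hZab : ∀ i, ∀ᵐ ω ∂μ, Z i ω ∈ Set.Icc (a i - m i) (b i - m i) := by
    intro i
    filter_upwards [hab i] with ω hω
    exact ⟨sub_le_sub_right hω.1 _, sub_le_sub_right hω.2 _⟩
  have hZmean : ∀ i, ∫ ω, Z i ω ∂μ = 0 := by
    intro i
    simp only [hZ]
    rw [integral_sub (hYint i) (integrable_const _), integral_const]
    simp [hm]
  -- range nonnegativity
  have hba : ∀ i, 0 ≤ b i - a i := by
    intro i
    obtain ⟨ω₀, hω₀⟩ := (hab i).exists
    linarith [hω₀.1, hω₀.2]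
  -- sum of squared ranges
  have hcast : ((N * (N - 1) : ℕ) : ℝ) = Nr * (Nr - 1) := by
    have h1 : (1 : ℕ) ≤ N := by omega
    push_cast [Nat.cast_sub h1]
    ring
  have hsum : ∑ i, (b i - a i) ^ 2 ≤ C := by
    set r₂ : ℝ := (γ + 1) * D₂ / (Nr * (Nr - 1)) with hr₂
    set r₁ : ℝ := D₁ / Nr with hr₁
    have hr₂0 : 0 ≤ r₂ := by positivity
    have hr₁0 : 0 ≤ r₁ := by positivity
    have hstep : ∑ i, (b i - a i) ^ 2 ≤
        ∑ i : Fin (N ^ 2), (if (i : ℕ) < N * (N - 1) then r₂ ^ 2 else r₁ ^ 2) := by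
      apply Finset.sum_le_sum
      intro i _
      by_cases hi : (i : ℕ) < N * (N - 1)
      · rw [if_pos hi]
        exact pow_le_pow_left₀ (hba i) (hlen₁ i hi) 2
      · rw [if_neg hi]
        exact pow_le_pow_left₀ (hba i) (hlen₂ i (le_of_not_gt hi)) 2
    have hmle : N * (N - 1) ≤ N ^ 2 := by nlinarith [Nat.sub_le N 1]
    have hcount : ∑ i : Fin (N ^ 2), (if (i : ℕ) < N * (N - 1) then r₂ ^ 2 else r₁ ^ 2)
        = (N * (N - 1) : ℕ) * r₂ ^ 2 + (N : ℕ) * r₁ ^ 2 := by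
      rw [Fin.sum_univ_eq_sum_range (fun i => if i < N * (N - 1) then r₂ ^ 2 else r₁ ^ 2)]
      rw [Finset.range_eq_Ico, ← Finset.sum_Ico_consecutive _ (Nat.zero_le (N * (N - 1))) hmle]
      have h1 : ∑ i ∈ Finset.Ico 0 (N * (N - 1)),
          (if i < N * (N - 1) then r₂ ^ 2 else r₁ ^ 2) = (N * (N - 1) : ℕ) * r₂ ^ 2 := by
        rw [Finset.sum_congr rfl (fun i hi => if_pos (Finset.mem_Ico.mp hi).2)]
        rw [Finset.sum_const, Nat.card_Ico, Nat.sub_zero, nsmul_eq_mul]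
      have h2 : ∑ i ∈ Finset.Ico (N * (N - 1)) (N ^ 2),
          (if i < N * (N - 1) then r₂ ^ 2 else r₁ ^ 2) = (N : ℕ) * r₁ ^ 2 := by
        rw [Finset.sum_congr rfl
          (fun i hi => if_neg (not_lt.mpr (Finset.mem_Ico.mp hi).1))]
        rw [Finset.sum_const, Nat.card_Ico, nsmul_eq_mul]
        have h1 : N * (N - 1) + N = N * N := by
          cases N with
          | zero => simp
          | succ n => rw [Nat.succ_sub_one, ← Nat.mul_succ]
        have hnn : N ^ 2 - N * (N - 1) = N := by
          rw [sq, ← h1, Nat.add_sub_cancel_left]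
        rw [hnn]
      rw [h1, h2]
    rw [hcount] at hstep
    refine le_trans hstep ?_
    rw [hcast]
    apply le_of_eq
    rw [hCdef, hAdef, hr₂, hr₁]
    field_simp
    ring
  -- rewrite the target set in terms of Z
  have hSmean : ∫ ω', (∑ i, Y i ω') ∂μ = ∑ i, m i := by
    rw [integral_finset_sum _ (fun i _ => hYint i)]
  have hset : {ω | ε ≤ |(∑ i, Y i ω) - ∫ ω', (∑ i, Y i ω') ∂μ|}
      = {ω | ε ≤ |∑ i, Z i ω|} := by
    ext ω
    simp only [Set.mem_setOf_eq, hSmean, hZ, Finset.sum_sub_distrib]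
  have hbd := hoeffding_two_sided μ Z hZmeas hZindep (fun i => a i - m i)
    (fun i => b i - m i) hZab hZmean C hCpos (by simpa using hsum) ε hε0
  have hval : 2 * Real.exp (-2 * ε ^ 2 / C) = δ := by
    have harg : -2 * ε ^ 2 / C = -Real.log (2 / δ) := by
      rw [hε2, hCdef, hBdef]
      field_simp
    rw [harg, Real.exp_neg, Real.exp_log (by positivity)]
    field_simp
  rw [hset]
  have hfin : (μ {ω | ε ≤ |∑ i, Z i ω|}).toReal ≤ δ := by
    rw [← hval]; exact hbd
  calc μ {ω | ε ≤ |∑ i, Z i ω|}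
      = ENNReal.ofReal ((μ {ω | ε ≤ |∑ i, Z i ω|}).toReal) :=
        (ENNReal.ofReal_toReal (measure_ne_top _ _)).symm
    _ ≤ ENNReal.ofReal δ := ENNReal.ofReal_le_ofReal hfin
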